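/- Let K ⊂ ℝ² be a convex body whose boundary contains no pair of parallel segments lying in distinct parallel supporting lines. Then for every direction angle α ∈ [0, 2π) there is exactly one oriented affine diameter of K whose direction vector is a positive multiple of (cos α, sin α), and this affine diameter depends continuously on α. -/

import Mathlib

open scoped Pointwise

noncomputable section

def suppSet (L : Set (EuclideanSpace ℝ (Fin 2))) (u : EuclideanSpace ℝ (Fin 2)) :
    Set (EuclideanSpace ℝ (Fin 2)) :=
  {x ∈ L | ∀ y ∈ L, inner ℝ u y ≤ (inner ℝ u x : ℝ)}

def adim (s : Set (EuclideanSpace ℝ (Fin 2))) : ℕ :=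
  Module.finrank ℝ (affineSpan ℝ s).direction

/-- An oriented affine diameter of `K`: an ordered pair of points of `K` lying in
distinct parallel supporting lines, oriented from `a` to `a₁`. -/
def IsOrientedAffDiam (K : Set (EuclideanSpace ℝ (Fin 2))) (a a₁ : EuclideanSpace ℝ (Fin 2)) :
    Prop :=
  a ∈ K ∧ a₁ ∈ K ∧ ∃ u : EuclideanSpace ℝ (Fin 2), ‖u‖ = 1 ∧
    (∀ z ∈ K, inner ℝ u z ≤ (inner ℝ u a₁ : ℝ)) ∧
    (∀ z ∈ K, (inner ℝ u a : ℝ) ≤ inner ℝ u z) ∧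
    (inner ℝ u a : ℝ) < inner ℝ u a₁

open Filter Topology Metric RealInnerProductSpace

abbrev E2 := EuclideanSpace ℝ (Fin 2)

-- strictness inside the interior
lemma interior_lt {K : Set E2} {u : E2} (hu : u ≠ 0) {m : ℝ}
    (h : ∀ z ∈ K, ⟪u, z⟫ ≤ m) {x : E2} (hx : x ∈ interior K) : ⟪u, x⟫ < m := by
  obtain ⟨ε, hε, hball⟩ := Metric.isOpen_iff.1 isOpen_interior x hx
  have hun : 0 < ‖u‖ := norm_pos_iff.2 hu
  set t : ℝ := ε / (2 * ‖u‖) with ht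
  have htpos : 0 < t := by positivity
  have hmem : x + t • u ∈ K := by
    apply interior_subset
    apply hball
    rw [Metric.mem_ball, dist_eq_norm]
    have : ‖x + t • u - x‖ = t * ‖u‖ := by
      rw [add_sub_cancel_left, norm_smul, Real.norm_eq_abs, abs_of_pos htpos]
    rw [this, ht]
    calc ε / (2 * ‖u‖) * ‖u‖ = ε / 2 := by field_simp
    _ < ε := by linarith
  have h2 := h _ hmem
  rw [inner_add_right, real_inner_smul_right, real_inner_self_eq_norm_sq] at h2
  have hpos : 0 < t * ‖u‖ ^ 2 := by positivity
  linarith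

lemma not_flat {K : Set E2} (hKint : (interior K).Nonempty) {u : E2} (hu : u ≠ 0) {m : ℝ}
    (hub : ∀ z ∈ K, ⟪u, z⟫ ≤ m) (hlb : ∀ z ∈ K, m ≤ ⟪u, z⟫) : False := by
  obtain ⟨x, hx⟩ := hKint
  exact absurd (hlb x (interior_subset hx)) (not_le.2 (interior_lt hu hub hx))

lemma le_of_lt_interior {K : Set E2} (hKconv : Convex ℝ K) (hKint : (interior K).Nonempty)
    (f : E2 →L[ℝ] ℝ) (s₀ : ℝ) (h : ∀ z ∈ interior K, f z < s₀) :
    ∀ x ∈ K, f x ≤ s₀ := by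
  obtain ⟨x₀, hx₀⟩ := hKint
  intro x hx
  have hc : Tendsto (fun t : ℝ => f (x + t • (x₀ - x))) (𝓝[>] 0) (𝓝 (f x)) := by
    have hcont : Continuous fun t : ℝ => f (x + t • (x₀ - x)) := by fun_prop
    have := (hcont.tendsto 0).mono_left (nhdsWithin_le_nhds (s := Set.Ioi (0:ℝ)))
    simpa using this
  refine le_of_tendsto hc ?_
  filter_upwards [Ioc_mem_nhdsGT_of_mem (Set.left_mem_Ico.2 zero_lt_one)] with t ht
  exact (h _ (hKconv.add_smul_sub_mem_interior hx hx₀ ht)).le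

lemma exists_diam {K : Set E2} (hKc : IsCompact K) (hKconv : Convex ℝ K)
    (hKint : (interior K).Nonempty) (v : E2) (hv : ‖v‖ = 1) :
    ∃ p : E2 × E2, IsOrientedAffDiam K p.1 p.2 ∧ ∃ c : ℝ, 0 < c ∧ p.2 - p.1 = c • v := by
  have hv2 : ⟪v, v⟫ = 1 := by
    rw [real_inner_self_eq_norm_sq, hv]; norm_num
  -- the compact set of chords parallel to v
  set T : Set (E2 × E2) := (K ×ˢ K) ∩ {p | p.2 - p.1 = ⟪v, p.2 - p.1⟫ • v} with hT
  have hTclosed : IsClosed {p : E2 × E2 | p.2 - p.1 = ⟪v, p.2 - p.1⟫ • v} := by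
    have hc1 : Continuous fun p : E2 × E2 => p.2 - p.1 := by fun_prop
    have : Continuous fun p : E2 × E2 => (p.2 - p.1) - ⟪v, p.2 - p.1⟫ • v := by
      apply hc1.sub
      exact (continuous_const.inner (𝕜 := ℝ) hc1).smul (continuous_const : Continuous fun _ : E2 × E2 => v)
    have := isClosed_singleton (x := (0 : E2)).preimage this
    convert this using 1
    ext p
    simp [sub_eq_zero]
  have hTcomp : IsCompact T := (hKc.prod hKc).inter_right hTclosed
  obtain ⟨x₀, hx₀⟩ := hKint
  have hx₀K : x₀ ∈ K := interior_subset hx₀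
  have hTne : T.Nonempty := ⟨(x₀, x₀), ⟨⟨hx₀K, hx₀K⟩, by simp⟩⟩
  have hgc : Continuous fun p : E2 × E2 => ⟪v, p.2 - p.1⟫ := by
    exact continuous_const.inner (by fun_prop)
  obtain ⟨p₀, hp₀T, hmax⟩ := hTcomp.exists_isMaxOn hTne hgc.continuousOn
  obtain ⟨⟨haK, hbK⟩, hpar⟩ := hp₀T
  set a := p₀.1 with ha
  set b := p₀.2 with hb
  set ℓ : ℝ := ⟪v, b - a⟫ with hℓ
  have hab : b - a = ℓ • v := hpar
  -- ℓ is positive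
  obtain ⟨ε, hε, hball⟩ := Metric.isOpen_iff.1 isOpen_interior x₀ hx₀
  have hsmem : ∀ t : ℝ, |t| < ε → x₀ + t • v ∈ K := by
    intro t htlt
    apply interior_subset
    apply hball
    rw [Metric.mem_ball, dist_eq_norm, add_sub_cancel_left, norm_smul, hv, mul_one,
      Real.norm_eq_abs]
    exact htlt
  have hmemT : ((x₀ + (-(ε/2)) • v, x₀ + (ε/2) • v) : E2 × E2) ∈ T := by
    refine ⟨⟨hsmem _ (by rw [abs_neg, abs_of_pos (by linarith)]; linarith),
      hsmem _ (by rw [abs_of_pos (by linarith)]; linarith)⟩, ?_⟩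
    show (x₀ + (ε/2) • v) - (x₀ + (-(ε/2)) • v) = _ • v
    have hd : (x₀ + (ε/2) • v) - (x₀ + (-(ε/2)) • v) = ε • v := by
      module
    rw [hd, real_inner_smul_right, hv2, mul_one]
  have hℓpos : 0 < ℓ := by
    have := hmax hmemT
    simp only [Set.mem_setOf_eq] at this
    have h2 : ⟪v, (x₀ + (ε/2) • v) - (x₀ + (-(ε/2)) • v)⟫ = ε := by
      have hd : (x₀ + (ε/2) • v) - (x₀ + (-(ε/2)) • v) = ε • v := by
        module
      rw [hd, real_inner_smul_right, hv2, mul_one]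
    rw [h2] at this
    linarith [this]
  -- separation
  set B : Set E2 := (fun z => ℓ • v + z) '' interior K with hB
  have hBopen : IsOpen B := (isOpenMap_add_left (ℓ • v)) _ isOpen_interior
  have hBconv : Convex ℝ B := hKconv.interior.translate (ℓ • v)
  have hdisj : Disjoint (interior K) B := by
    rw [Set.disjoint_left]
    rintro w hw ⟨z, hz, rfl⟩
    -- ℓ • v + z ∈ interior K and z ∈ interior K : make a longer chord
    obtain ⟨ε₁, hε₁, hball₁⟩ := Metric.isOpen_iff.1 isOpen_interior _ hw
    obtain ⟨ε₂, hε₂, hball₂⟩ := Metric.isOpen_iff.1 isOpen_interior _ hz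
    set δ := min ε₁ ε₂ with hδ
    have hδpos : 0 < δ := lt_min hε₁ hε₂
    have hm1 : (ℓ • v + z) + (δ/2) • v ∈ K := by
      apply interior_subset; apply hball₁
      rw [Metric.mem_ball, dist_eq_norm, add_sub_cancel_left, norm_smul, hv, mul_one,
        Real.norm_eq_abs, abs_of_pos (by linarith)]
      exact (half_lt_self hδpos).trans_le (min_le_left _ _)
    have hm2 : z + (-(δ/2)) • v ∈ K := by
      apply interior_subset; apply hball₂
      rw [Metric.mem_ball, dist_eq_norm, add_sub_cancel_left, norm_smul, hv, mul_one,
        Real.norm_eq_abs, abs_neg, abs_of_pos (by linarith)]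
      exact (half_lt_self hδpos).trans_le (min_le_right _ _)
    have hmemT' : ((z + (-(δ/2)) • v, (ℓ • v + z) + (δ/2) • v) : E2 × E2) ∈ T := by
      refine ⟨⟨hm2, hm1⟩, ?_⟩
      show _ - _ = _ • v
      have hd : ((ℓ • v + z) + (δ/2) • v) - (z + (-(δ/2)) • v) = (ℓ + δ) • v := by
        module
      rw [hd, real_inner_smul_right, hv2, mul_one]
    have := hmax hmemT'
    simp only [Set.mem_setOf_eq] at this
    have h2 : ⟪v, ((ℓ • v + z) + (δ/2) • v) - (z + (-(δ/2)) • v)⟫ = ℓ + δ := by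
      have hd : ((ℓ • v + z) + (δ/2) • v) - (z + (-(δ/2)) • v) = (ℓ + δ) • v := by
        module
      rw [hd, real_inner_smul_right, hv2, mul_one]
    rw [h2] at this
    linarith [this]
  obtain ⟨f, s₀, hfA, hfB⟩ := geometric_hahn_banach_open_open hKconv.interior isOpen_interior
    hBconv hBopen hdisj
  -- bounds on all of K
  have hub : ∀ x ∈ K, f x ≤ s₀ := le_of_lt_interior hKconv ⟨x₀, hx₀⟩ f s₀ hfA
  have hlb : ∀ y ∈ K, s₀ ≤ f y + ℓ * f v := by
    have h' : ∀ z ∈ interior K, (-f) z < ℓ * f v - s₀ := by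
      intro z hz
      have := hfB _ ⟨z, hz, rfl⟩
      simp only [ContinuousLinearMap.neg_apply]
      have hfs : f (ℓ • v + z) = ℓ * f v + f z := by
        rw [map_add, map_smul]; simp [smul_eq_mul]
      rw [hfs] at this
      linarith
    intro y hy
    have := le_of_lt_interior hKconv ⟨x₀, hx₀⟩ (-f) (ℓ * f v - s₀) h' y hy
    simp only [ContinuousLinearMap.neg_apply] at this
    linarith
  have hfv : 0 < f v := by
    have h1 := hfA x₀ hx₀
    have h2 := hlb x₀ hx₀K
    nlinarith
  have hfb : f b = f a + ℓ * f v := by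
    have : f (b - a) = ℓ * f v := by rw [hab, map_smul]; simp [smul_eq_mul]
    rw [map_sub] at this; linarith
  have hs₀ : s₀ = f b := by
    have h1 := hub b hbK
    have h2 := hlb a haK
    linarith
  -- convert to a unit vector
  set u₀ : E2 := (InnerProductSpace.toDual ℝ E2).symm f with hu₀
  have hu₀app : ∀ x : E2, ⟪u₀, x⟫ = f x := fun x =>
    InnerProductSpace.toDual_symm_apply
  have hu₀ne : u₀ ≠ 0 := by
    intro h
    have := hu₀app v
    rw [h, inner_zero_left] at this
    linarith
  have hn : 0 < ‖u₀‖ := norm_pos_iff.2 hu₀ne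
  set u : E2 := ‖u₀‖⁻¹ • u₀ with hu
  have hunorm : ‖u‖ = 1 := norm_smul_inv_norm hu₀ne
  have huapp : ∀ x : E2, ⟪u, x⟫ = ‖u₀‖⁻¹ * f x := by
    intro x
    rw [hu, real_inner_smul_left, hu₀app]
  refine ⟨(a, b), ⟨haK, hbK, u, hunorm, ?_, ?_, ?_⟩, ℓ, hℓpos, hab⟩
  · intro z hz
    show ⟪u, z⟫ ≤ ⟪u, b⟫
    rw [huapp, huapp]
    have h2 : f z ≤ f b := by rw [← hs₀]; exact hub z hz
    exact mul_le_mul_of_nonneg_left h2 (inv_nonneg.2 hn.le)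
  · intro z hz
    show ⟪u, a⟫ ≤ ⟪u, z⟫
    rw [huapp, huapp]
    have h2 : f a ≤ f z := by
      have := hlb z hz; rw [hs₀, hfb] at this; linarith
    exact mul_le_mul_of_nonneg_left h2 (inv_nonneg.2 hn.le)
  · show ⟪u, a⟫ < ⟪u, b⟫
    rw [huapp, huapp]
    have h2 : f a < f b := by
      rw [hfb]
      have := mul_pos hℓpos hfv
      linarith
    exact (mul_lt_mul_iff_right₀ (inv_pos.2 hn)).2 h2

lemma one_le_adim {s : Set E2} {x y : E2} (hx : x ∈ s) (hy : y ∈ s) (hne : x ≠ y) :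
    1 ≤ adim s := by
  have hmem : (y -ᵥ x) ∈ (affineSpan ℝ s).direction :=
    AffineSubspace.vsub_mem_direction (mem_affineSpan ℝ hy) (mem_affineSpan ℝ hx)
  have hne' : y - x ≠ 0 := sub_ne_zero.2 hne.symm
  have : Nontrivial (affineSpan ℝ s).direction :=
    ⟨⟨y - x, hmem⟩, 0, by simp [hne']⟩
  exact Module.finrank_pos


lemma diam_unique {K : Set E2}
    (hnp : ∀ u : E2, ‖u‖ = 1 → adim (suppSet K u) + adim (suppSet K (-u)) ≤ 1)
    {v : E2} (hv : ‖v‖ = 1) {p q : E2 × E2}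
    (hp : IsOrientedAffDiam K p.1 p.2 ∧ ∃ c : ℝ, 0 < c ∧ p.2 - p.1 = c • v)
    (hq : IsOrientedAffDiam K q.1 q.2 ∧ ∃ c : ℝ, 0 < c ∧ q.2 - q.1 = c • v) :
    p = q := by
  obtain ⟨⟨haK, ha₁K, u, hu, humax, humin, hult⟩, c, hc, hcv⟩ := hp
  obtain ⟨⟨hbK, hb₁K, w, hw, hwmax, hwmin, hwlt⟩, d, hd, hdv⟩ := hq
  have hv2 : ⟪v, v⟫ = (1:ℝ) := by rw [real_inner_self_eq_norm_sq, hv]; norm_num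
  have hinner : ∀ e : E2, ⟪e, p.2⟫ - ⟪e, p.1⟫ = c * ⟪e, v⟫ := by
    intro e
    have : ⟪e, p.2 - p.1⟫ = c * ⟪e, v⟫ := by rw [hcv, real_inner_smul_right]
    rw [inner_sub_right] at this; linarith
  have hinner' : ∀ e : E2, ⟪e, q.2⟫ - ⟪e, q.1⟫ = d * ⟪e, v⟫ := by
    intro e
    have : ⟪e, q.2 - q.1⟫ = d * ⟪e, v⟫ := by rw [hdv, real_inner_smul_right]
    rw [inner_sub_right] at this; linarith
  have huv : 0 < ⟪u, v⟫ := by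
    have h1 := hinner u
    nlinarith
  have hwv : 0 < ⟪w, v⟫ := by
    have h1 := hinner' w
    nlinarith
  -- c = d
  have hdc : d ≤ c := by
    have h1 := humax q.2 hb₁K
    have h2 := humin q.1 hbK
    have e1 := hinner u
    have e2 := hinner' u
    have : d * ⟪u, v⟫ ≤ c * ⟪u, v⟫ := by linarith
    exact le_of_mul_le_mul_right (by linarith [this]) huv
  have hcd : c ≤ d := by
    have h1 := hwmax p.2 ha₁K
    have h2 := hwmin p.1 haK
    have e1 := hinner w
    have e2 := hinner' w
    have : c * ⟪w, v⟫ ≤ d * ⟪w, v⟫ := by linarith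
    exact le_of_mul_le_mul_right (by linarith [this]) hwv
  have hcd' : c = d := le_antisymm hcd hdc
  -- the u-inner products of the endpoints agree
  have heq2 : ⟪u, q.2⟫ = ⟪u, p.2⟫ := by
    have h1 := humax q.2 hb₁K
    have h2 := humin q.1 hbK
    have e1 := hinner u
    have e2 := hinner' u
    rw [← hcd'] at e2
    linarith
  have heq1 : ⟪u, q.1⟫ = ⟪u, p.1⟫ := by
    have e1 := hinner u
    have e2 := hinner' u
    rw [← hcd'] at e2
    linarith
  -- the chords coincide
  have h11 : p.1 = q.1 := by
    by_contra hne
    have hs2 : p.2 ∈ suppSet K u := ⟨ha₁K, fun y hy => humax y hy⟩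
    have hs2' : q.2 ∈ suppSet K u := ⟨hb₁K, fun y hy => (humax y hy).trans heq2.symm.le⟩
    have hs1 : p.1 ∈ suppSet K (-u) := by
      refine ⟨haK, fun y hy => ?_⟩
      simp only [inner_neg_left, neg_le_neg_iff]
      exact humin y hy
    have hs1' : q.1 ∈ suppSet K (-u) := by
      refine ⟨hbK, fun y hy => ?_⟩
      simp only [inner_neg_left, neg_le_neg_iff]
      exact heq1.le.trans (humin y hy)
    have hne2 : p.2 ≠ q.2 := by
      intro h
      apply hne
      have : p.2 - p.1 = q.2 - q.1 := by rw [hcv, hdv, hcd']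
      rw [h] at this
      have := sub_right_injective this
      exact this
    have ha1 := one_le_adim hs2 hs2' hne2
    have ha2 := one_le_adim hs1 hs1' hne
    have := hnp u hu
    omega
  have h22 : p.2 = q.2 := by
    have : p.2 - p.1 = q.2 - q.1 := by rw [hcv, hdv, hcd']
    rw [h11] at this
    exact sub_left_injective this
  exact Prod.ext h11 h22

def dvec (α : ℝ) : E2 := !₂[Real.cos α, Real.sin α]

lemma dvec_norm (α : ℝ) : ‖dvec α‖ = 1 := by
  rw [EuclideanSpace.norm_eq]
  simp [dvec, Fin.sum_univ_two, Real.norm_eq_abs, sq_abs, Real.cos_sq_add_sin_sq]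

lemma dvec_continuous : Continuous dvec := by
  apply (PiLp.continuous_toLp (p := 2) (β := fun _ : Fin 2 => ℝ)).comp
  apply continuous_pi  -- ?
  intro i
  fin_cases i
  · exact Real.continuous_cos
  · exact Real.continuous_sin


theorem oriented_affDiam_unique_continuous (K : Set (EuclideanSpace ℝ (Fin 2)))
    (hKc : IsCompact K) (hKconv : Convex ℝ K) (hKint : (interior K).Nonempty)
    (hnp : ∀ u : EuclideanSpace ℝ (Fin 2), ‖u‖ = 1 →
      adim (suppSet K u) + adim (suppSet K (-u)) ≤ 1) :
    (∀ α : ℝ, ∃! p : EuclideanSpace ℝ (Fin 2) × EuclideanSpace ℝ (Fin 2),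
      IsOrientedAffDiam K p.1 p.2 ∧
      ∃ c : ℝ, 0 < c ∧ p.2 - p.1 = c • (!₂[Real.cos α, Real.sin α] : EuclideanSpace ℝ (Fin 2))) ∧
    ∃ f : ℝ → EuclideanSpace ℝ (Fin 2) × EuclideanSpace ℝ (Fin 2), Continuous f ∧
      ∀ α : ℝ, IsOrientedAffDiam K (f α).1 (f α).2 ∧
        ∃ c : ℝ, 0 < c ∧
          (f α).2 - (f α).1 = c • (!₂[Real.cos α, Real.sin α] : EuclideanSpace ℝ (Fin 2)) := by
  have hex : ∀ α : ℝ, ∃ p : E2 × E2, IsOrientedAffDiam K p.1 p.2 ∧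
      ∃ c : ℝ, 0 < c ∧ p.2 - p.1 = c • dvec α :=
    fun α => exists_diam hKc hKconv hKint (dvec α) (dvec_norm α)
  set f : ℝ → E2 × E2 := fun α => Classical.choose (hex α) with hf
  have hPf : ∀ α, IsOrientedAffDiam K (f α).1 (f α).2 ∧
      ∃ c : ℝ, 0 < c ∧ (f α).2 - (f α).1 = c • dvec α := fun α => Classical.choose_spec (hex α)
  have huniq : ∀ α (q : E2 × E2), (IsOrientedAffDiam K q.1 q.2 ∧
      ∃ c : ℝ, 0 < c ∧ q.2 - q.1 = c • dvec α) → q = f α :=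
    fun α q hq => diam_unique hnp (dvec_norm α) hq (hPf α)
  have hseq : ∀ (x : ℕ → ℝ) (α : ℝ), Tendsto x atTop (𝓝 α) →
      Tendsto (fun n => f (x n)) atTop (𝓝 (f α)) := by
    intro x α hx
    by_contra hcon
    rw [Metric.tendsto_atTop] at hcon
    push_neg at hcon
    obtain ⟨ε, hε, hfar⟩ := hcon
    obtain ⟨φ, hφmono, hφ⟩ := Nat.exists_strictMono_subsequence (P := fun n =>
        ε ≤ dist (f (x n)) (f α)) (fun N => by
      obtain ⟨n, hn, h⟩ := hfar (N+1)
      exact ⟨n, by omega, h⟩)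
    have hmem : ∀ n, f (x (φ n)) ∈ K ×ˢ K := fun n =>
      ⟨(hPf _).1.1, (hPf _).1.2.1⟩
    obtain ⟨q, hqmem, ψ, hψmono, hψ⟩ := (hKc.prod hKc).tendsto_subseq hmem
    set U : ℕ → E2 := fun n => Classical.choose (hPf (x (φ (ψ n)))).1.2.2 with hU
    have hUspec : ∀ n, ‖U n‖ = 1 ∧
        (∀ z ∈ K, ⟪U n, z⟫ ≤ ⟪U n, (f (x (φ (ψ n)))).2⟫) ∧
        (∀ z ∈ K, ⟪U n, (f (x (φ (ψ n)))).1⟫ ≤ ⟪U n, z⟫) ∧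
        ⟪U n, (f (x (φ (ψ n)))).1⟫ < ⟪U n, (f (x (φ (ψ n)))).2⟫ := fun n =>
      Classical.choose_spec (hPf (x (φ (ψ n)))).1.2.2
    have hUsphere : ∀ n, U n ∈ Metric.sphere (0 : E2) 1 := fun n =>
      mem_sphere_zero_iff_norm.2 (hUspec n).1
    obtain ⟨uZ, huZmem, ψ₂, hψ₂mono, hψ₂⟩ := (isCompact_sphere (0:E2) 1).tendsto_subseq hUsphere
    have huZ : ‖uZ‖ = 1 := mem_sphere_zero_iff_norm.1 huZmem
    set j : ℕ → ℕ := fun n => φ (ψ (ψ₂ n)) with hj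
    have hβ : Tendsto (fun n => x (j n)) atTop (𝓝 α) :=
      hx.comp ((hφmono.comp (hψmono.comp hψ₂mono)).tendsto_atTop)
    have hgq : Tendsto (fun n => f (x (j n))) atTop (𝓝 q) :=
      hψ.comp hψ₂mono.tendsto_atTop
    have hA : Tendsto (fun n => (f (x (j n))).1) atTop (𝓝 q.1) :=
      (continuous_fst.tendsto q).comp hgq
    have hA1 : Tendsto (fun n => (f (x (j n))).2) atTop (𝓝 q.2) :=
      (continuous_snd.tendsto q).comp hgq
    have hUlim : Tendsto (fun n => U (ψ₂ n)) atTop (𝓝 uZ) := hψ₂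
    have hq1K : q.1 ∈ K := hqmem.1
    have hq2K : q.2 ∈ K := hqmem.2
    have hmaxZ : ∀ z ∈ K, ⟪uZ, z⟫ ≤ ⟪uZ, q.2⟫ := by
      intro z hz
      refine le_of_tendsto_of_tendsto' (hUlim.inner (tendsto_const_nhds (x := z)))
        (hUlim.inner hA1) (fun n => ?_)
      exact ((hUspec (ψ₂ n)).2.1 z hz)
    have hminZ : ∀ z ∈ K, ⟪uZ, q.1⟫ ≤ ⟪uZ, z⟫ := by
      intro z hz
      refine le_of_tendsto_of_tendsto' (hUlim.inner hA)
        (hUlim.inner (tendsto_const_nhds (x := z))) (fun n => ?_)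
      exact ((hUspec (ψ₂ n)).2.2.1 z hz)
    have hstrict : ⟪uZ, q.1⟫ < ⟪uZ, q.2⟫ := by
      rcases lt_or_eq_of_le (hminZ q.2 hq2K) with h | h
      · exact h
      · exfalso
        have huZne : uZ ≠ 0 := by
          intro hh
          rw [hh, norm_zero] at huZ
          norm_num at huZ
        exact not_flat hKint huZne (m := ⟪uZ, q.1⟫)
          (fun z hz => (hmaxZ z hz).trans h.symm.le) hminZ
    have hCspec : ∀ n, (f (x (j n))).2 - (f (x (j n))).1
        = ⟪dvec (x (j n)), (f (x (j n))).2 - (f (x (j n))).1⟫ • dvec (x (j n)) := by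
      intro n
      obtain ⟨c, hc, hcv⟩ := (hPf (x (j n))).2
      rw [hcv, real_inner_smul_right, real_inner_self_eq_norm_sq, dvec_norm]
      norm_num
    have hvlim : Tendsto (fun n => dvec (x (j n))) atTop (𝓝 (dvec α)) :=
      (dvec_continuous.tendsto α).comp hβ
    have hdiff : Tendsto (fun n => (f (x (j n))).2 - (f (x (j n))).1) atTop (𝓝 (q.2 - q.1)) :=
      hA1.sub hA
    have hClim : Tendsto (fun n => (⟪dvec (x (j n)), (f (x (j n))).2 - (f (x (j n))).1⟫ : ℝ))
        atTop (𝓝 ⟪dvec α, q.2 - q.1⟫) := hvlim.inner hdiff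
    have hqdir : q.2 - q.1 = ⟪dvec α, q.2 - q.1⟫ • dvec α := by
      refine tendsto_nhds_unique hdiff ?_
      have h2 : Tendsto (fun n => (⟪dvec (x (j n)), (f (x (j n))).2 - (f (x (j n))).1⟫ : ℝ)
          • dvec (x (j n))) atTop (𝓝 (⟪dvec α, q.2 - q.1⟫ • dvec α)) := hClim.smul hvlim
      exact h2.congr (fun n => (hCspec n).symm)
    have hcpos : 0 < ⟪dvec α, q.2 - q.1⟫ := by
      rcases lt_trichotomy (⟪dvec α, q.2 - q.1⟫ : ℝ) 0 with h | h | h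
      · exfalso
        have hnn : ∀ n, (0:ℝ) ≤ ⟪dvec (x (j n)), (f (x (j n))).2 - (f (x (j n))).1⟫ := by
          intro n
          obtain ⟨c, hc, hcv⟩ := (hPf (x (j n))).2
          rw [hcv, real_inner_smul_right, real_inner_self_eq_norm_sq, dvec_norm]
          nlinarith
        have := le_of_tendsto_of_tendsto' tendsto_const_nhds hClim hnn
        linarith
      · exfalso
        rw [h, zero_smul] at hqdir
        have h12 : q.2 = q.1 := sub_eq_zero.1 hqdir
        rw [h12] at hstrict
        exact lt_irrefl _ hstrict
      · exact h
    have hPq : IsOrientedAffDiam K q.1 q.2 ∧ ∃ c : ℝ, 0 < c ∧ q.2 - q.1 = c • dvec α :=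
      ⟨⟨hq1K, hq2K, uZ, huZ, hmaxZ, hminZ, hstrict⟩, ⟪dvec α, q.2 - q.1⟫, hcpos, hqdir⟩
    have hqf : q = f α := huniq α q hPq
    have hdist : ∀ n, ε ≤ dist (f (x (j n))) (f α) := fun n => hφ (ψ (ψ₂ n))
    have hfin : ε ≤ dist q (f α) := by
      have hdl : Tendsto (fun n => dist (f (x (j n))) (f α)) atTop (𝓝 (dist q (f α))) :=
        hgq.dist tendsto_const_nhds
      exact le_of_tendsto_of_tendsto' tendsto_const_nhds hdl hdist
    rw [hqf, dist_self] at hfin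
    linarith
  have hcont : Continuous f := by
    apply continuous_iff_seqContinuous.2
    intro x α hx
    exact hseq x α hx
  refine ⟨fun α => ⟨f α, hPf α, fun q hq => huniq α q hq⟩, f, hcont, hPf⟩
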